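/- For every real number s > 1 there exists a positive real A such that for every odd integer a ≥ A, there are infinitely many even positive integers n with σ_s(an+2) > σ_s((a+1)n+1). -/

import Mathlib

open Finset

noncomputable def sigmaR (s : ℝ) (n : ℕ) : ℝ := ∑ d ∈ n.divisors, (d : ℝ) ^ s

lemma sigmaR_prime {s : ℝ} {p : ℕ} (hp : p.Prime) : sigmaR s p = 1 + (p : ℝ) ^ s := by
  rw [sigmaR, hp.divisors, Finset.sum_pair hp.one_lt.ne]
  simp

lemma sigmaR_even_lower {s : ℝ} {m : ℕ} (hm : Even m) (hm4 : 4 ≤ m) :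
    ((m / 2 : ℕ) : ℝ) ^ s + (m : ℝ) ^ s ≤ sigmaR s m := by
  obtain ⟨r, hr⟩ := hm
  have h0 : m ≠ 0 := by omega
  have hsub : ({m / 2, m} : Finset ℕ) ⊆ m.divisors := by
    intro d hd
    simp only [Finset.mem_insert, Finset.mem_singleton] at hd
    rcases hd with rfl | rfl
    · exact Nat.mem_divisors.2 ⟨⟨2, by omega⟩, h0⟩
    · exact Nat.mem_divisors.2 ⟨dvd_rfl, h0⟩
  have hne : m / 2 ≠ m := by omega
  calc ((m / 2 : ℕ) : ℝ) ^ s + (m : ℝ) ^ s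
      = ∑ d ∈ ({m / 2, m} : Finset ℕ), (d : ℝ) ^ s :=
        (Finset.sum_pair (f := fun d : ℕ => (d : ℝ) ^ s) hne).symm
    _ ≤ sigmaR s m := Finset.sum_le_sum_of_subset_of_nonneg hsub
        (fun d _ _ => Real.rpow_nonneg (by positivity) s)

lemma core (s : ℝ) (hs : 1 < s) {a n : ℕ} (ha : 1 ≤ a) (haodd : Odd a)
    (hn : 2 ≤ n) (hne : Even n)
    (hfrac : (1 + 1/(a:ℝ)) ^ s ≤ 1 + (2:ℝ) ^ (-s) / 2)
    (hp : ((a + 1) * n + 1).Prime) :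
    sigmaR s ((a + 1) * n + 1) < sigmaR s (a * n + 2) := by
  have hs0 : (0:ℝ) < s := by linarith
  set p := (a + 1) * n + 1 with hpdef
  set m := a * n + 2 with hmdef
  have hm4 : 4 ≤ m := by
    have : 2 ≤ a * n := le_trans hn (Nat.le_mul_of_pos_left n ha)
    omega
  have hmeven : Even m := ((hne.mul_left a).add even_two)
  have haR : (1:ℝ) ≤ (a:ℝ) := by exact_mod_cast ha
  have haRpos : (0:ℝ) < (a:ℝ) := by linarith
  have hM4 : (4:ℝ) ≤ (m:ℝ) := by exact_mod_cast hm4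
  have hM0 : (0:ℝ) < (m:ℝ) := by linarith
  have hnatineq : p * a ≤ m * (a + 1) := by
    rw [hpdef, hmdef]; nlinarith
  have hple : (p:ℝ) ≤ (m:ℝ) * (1 + 1/(a:ℝ)) := by
    rw [← mul_le_mul_iff_left₀ haRpos]
    have h1 : (m:ℝ) * (1 + 1/(a:ℝ)) * a = (m:ℝ) * ((a:ℝ) + 1) := by
      field_simp
    rw [h1]
    exact_mod_cast hnatineq
  have hps : (p:ℝ) ^ s ≤ (m:ℝ) ^ s * (1 + (2:ℝ) ^ (-s) / 2) := by
    calc (p:ℝ) ^ s ≤ ((m:ℝ) * (1 + 1/(a:ℝ))) ^ s :=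
          Real.rpow_le_rpow (by positivity) hple hs0.le
      _ = (m:ℝ) ^ s * (1 + 1/(a:ℝ)) ^ s := Real.mul_rpow hM0.le (by positivity)
      _ ≤ (m:ℝ) ^ s * (1 + (2:ℝ) ^ (-s) / 2) := by
          nlinarith [Real.rpow_nonneg hM0.le s]
  have hhalf : ((m / 2 : ℕ) : ℝ) ^ s = (m:ℝ) ^ s * (2:ℝ) ^ (-s) := by
    obtain ⟨r, hr⟩ := hmeven
    have h2 : ((m / 2 : ℕ) : ℝ) = (m:ℝ) / 2 := by
      rw [show m / 2 = r by omega, hr]; push_cast; ring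
    rw [h2, Real.div_rpow hM0.le (by norm_num), Real.rpow_neg (by norm_num)]
    ring
  have h2s : (2:ℝ) < (2:ℝ) ^ s := by
    calc (2:ℝ) = (2:ℝ) ^ (1:ℝ) := (Real.rpow_one 2).symm
      _ < (2:ℝ) ^ s := (Real.rpow_lt_rpow_left_iff (by norm_num)).mpr hs
  have h4s : (4:ℝ) ^ s * (2:ℝ) ^ (-s) = (2:ℝ) ^ s := by
    rw [show (4:ℝ) = 2 * 2 by norm_num, Real.mul_rpow (by norm_num) (by norm_num),
      mul_assoc, ← Real.rpow_add (by norm_num)]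
    simp
  have hM4s : (4:ℝ) ^ s ≤ (m:ℝ) ^ s := Real.rpow_le_rpow (by norm_num) hM4 hs0.le
  have hneg : (0:ℝ) < (2:ℝ) ^ (-s) := Real.rpow_pos_of_pos (by norm_num) _
  have key : 1 + (m:ℝ) ^ s * ((2:ℝ) ^ (-s) / 2) < (m:ℝ) ^ s * (2:ℝ) ^ (-s) := by
    nlinarith [mul_le_mul_of_nonneg_right hM4s hneg.le]
  rw [sigmaR_prime hp]
  calc 1 + (p:ℝ) ^ s ≤ 1 + (m:ℝ) ^ s * (1 + (2:ℝ) ^ (-s) / 2) := by linarith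
    _ < (m:ℝ) ^ s * (2:ℝ) ^ (-s) + (m:ℝ) ^ s := by nlinarith
    _ = ((m / 2 : ℕ) : ℝ) ^ s + (m:ℝ) ^ s := by rw [hhalf]
    _ ≤ sigmaR s m := sigmaR_even_lower hmeven hm4

/-- For every real `s > 1` there is a positive real `A` such that for every odd integer
`a ≥ A` there are infinitely many even positive integers `n` with
`σ_s(an+2) > σ_s((a+1)n+1)`. -/
theorem stmt_2 (s : ℝ) (hs : 1 < s) :
    ∃ A : ℝ, 0 < A ∧ ∀ a : ℕ, Odd a → A ≤ (a : ℝ) →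
      {n : ℕ | 0 < n ∧ Even n ∧
        sigmaR s ((a + 1) * n + 1) < sigmaR s (a * n + 2)}.Infinite := by
  have hs0 : (0:ℝ) < s := by linarith
  set ε : ℝ := (2:ℝ) ^ (-s) / 2 with hεdef
  have hε0 : 0 < ε := by positivity
  set c : ℝ := (1 + ε) ^ (1/s) with hcdef
  have hc1 : 1 < c := by
    rw [hcdef, Real.one_lt_rpow_iff_of_pos (by positivity)]
    left; constructor <;> [linarith; positivity]
  set B : ℝ := 1 / (c - 1) with hBdef
  refine ⟨max 1 B, lt_of_lt_of_le one_pos (le_max_left _ _), ?_⟩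
  intro a haodd hA
  have ha1 : 1 ≤ a := by
    by_contra h
    push_cast [Nat.lt_one_iff.mp (not_le.mp h)] at hA
    linarith [hA.trans' (le_max_left (1:ℝ) B)]
  have haR : (1:ℝ) ≤ a := by exact_mod_cast ha1
  have hfrac : (1 + 1/(a:ℝ)) ^ s ≤ 1 + ε := by
    have hB : B ≤ (a:ℝ) := le_trans (le_max_right _ _) hA
    have hBpos : 0 < B := by rw [hBdef]; exact div_pos one_pos (by linarith)
    have h1a : 1/(a:ℝ) ≤ c - 1 := by
      have h := one_div_le_one_div_of_le hBpos hB
      rw [hBdef, one_div_one_div] at h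
      exact h
    calc (1 + 1/(a:ℝ)) ^ s ≤ c ^ s :=
          Real.rpow_le_rpow (by positivity) (by linarith) hs0.le
      _ = 1 + ε := by
          rw [hcdef, ← Real.rpow_mul (by positivity), one_div,
            inv_mul_cancel₀ hs0.ne', Real.rpow_one]
  set q : ℕ := 2 * (a + 1) with hqdef
  haveI : NeZero q := ⟨by omega⟩
  have hS : {p : ℕ | p.Prime ∧ ((p : ZMod q)) = 1}.Infinite :=
    Nat.infinite_setOfPred_prime_and_eq_mod isUnit_one
  have hrep : ∀ p ∈ {p : ℕ | p.Prime ∧ ((p : ZMod q)) = 1},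
      ∃ k, 0 < k ∧ p = q * k + 1 ∧ p / q = k := by
    intro p hp
    obtain ⟨hpp, hmod⟩ := hp
    have hq1 : 1 < q := by omega
    have hm : p % q = 1 := by
      have h : ((p : ℕ) : ZMod q) = ((1 : ℕ) : ZMod q) := by simpa using hmod
      rw [ZMod.natCast_eq_natCast_iff'] at h
      simpa [Nat.mod_eq_of_lt hq1] using h
    have heq : p = q * (p / q) + 1 := by
      conv_lhs => rw [← Nat.div_add_mod p q]
      omega
    refine ⟨p / q, ?_, heq, rfl⟩
    rcases Nat.eq_zero_or_pos (p / q) with h | h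
    · exfalso; rw [h] at heq; exact hpp.one_lt.ne' (by omega)
    · exact h
  have hsub : (fun p => 2 * (p / q)) '' {p : ℕ | p.Prime ∧ ((p : ZMod q)) = 1} ⊆
      {n : ℕ | 0 < n ∧ Even n ∧
        sigmaR s ((a + 1) * n + 1) < sigmaR s (a * n + 2)} := by
    rintro _ ⟨p, hp, rfl⟩
    obtain ⟨k, hkpos, heq, hdiv⟩ := hrep p hp
    simp only [hdiv]
    have hpn : (a + 1) * (2 * k) + 1 = p := by rw [heq, hqdef]; ring
    exact ⟨by omega, ⟨k, by ring⟩, core s hs ha1 haodd (by omega) ⟨k, by ring⟩ hfrac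
      (by rw [hpn]; exact hp.1)⟩
  refine (hS.image ?_).mono hsub
  intro p hp p' hp' hf
  obtain ⟨k, _, heq, hdiv⟩ := hrep p hp
  obtain ⟨k', _, heq', hdiv'⟩ := hrep p' hp'
  simp only [hdiv, hdiv'] at hf
  have h : k = k' := by omega
  rw [heq, heq', h]
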